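/- Apéry limit for Franel numbers (s = 3): let A(n) = ∑_{k=0}^n binom(n,k)^3 and let B(n) be the coefficient of t² in ∑_{k=0}^n binom(n,k)^3 [∏_{j=1}^k (1 - t/j) ∏_{j=1}^{n-k}(1 + t/j)]^{-3}, normalized so B(1) = 1 (i.e., divide by 12). Then lim_{n→∞} B(n)/A(n) = ζ(2)/4 = π²/24. -/

import Mathlib

open Real Filter

noncomputable def franelA3 (n : ℕ) (t : ℝ) : ℝ :=
  ∑ k ∈ Finset.range (n + 1), (n.choose k : ℝ) ^ 3 *
    (((∏ j ∈ Finset.Icc 1 k, (1 - t / (j : ℝ))) *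
      ∏ j ∈ Finset.Icc 1 (n - k), (1 + t / (j : ℝ)))⁻¹) ^ 3

noncomputable section FranelAux

/-- harmonic number -/
def Hs (m : ℕ) : ℝ := ∑ j ∈ Finset.Icc 1 m, (1 : ℝ) / j
/-- second-order harmonic number -/
def H2s (m : ℕ) : ℝ := ∑ j ∈ Finset.Icc 1 m, (1 : ℝ) / (j : ℝ) ^ 2

variable {ι : Type*} [DecidableEq ι]

def Pf (s : Finset ι) (c : ι → ℝ) (t : ℝ) : ℝ := ∏ i ∈ s, (1 + c i * t)
def Df (s : Finset ι) (c : ι → ℝ) (t : ℝ) : ℝ :=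
  ∑ i ∈ s, c i * ∏ j ∈ s.erase i, (1 + c j * t)
def Phif (s : Finset ι) (c : ι → ℝ) (t : ℝ) : ℝ := -3 * ((Pf s c t)⁻¹) ^ 4 * Df s c t

lemma Pf_zero (s : Finset ι) (c : ι → ℝ) : Pf s c 0 = 1 := by simp [Pf]

lemma Df_zero (s : Finset ι) (c : ι → ℝ) : Df s c 0 = ∑ i ∈ s, c i := by simp [Df]

lemma Pf_hasDerivAt (s : Finset ι) (c : ι → ℝ) (t : ℝ) :
    HasDerivAt (Pf s c) (Df s c t) t := by
  have h := HasDerivAt.fun_finsetProd (u := s) (f := fun i u => 1 + c i * u) (f' := fun i => c i)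
    (x := t) (fun i _ => by simpa using ((hasDerivAt_id t).const_mul (c i)).const_add 1)
  refine h.congr_deriv (Eq.symm ?_)
  simp only [Df, smul_eq_mul]
  exact Finset.sum_congr rfl fun i _ => mul_comm _ _

lemma Df_hasDerivAt_zero (s : Finset ι) (c : ι → ℝ) :
    HasDerivAt (Df s c) ((∑ i ∈ s, c i) ^ 2 - ∑ i ∈ s, (c i) ^ 2) 0 := by
  have h : ∀ i ∈ s, HasDerivAt (fun t => c i * Pf (s.erase i) c t)
      (c i * ∑ j ∈ s.erase i, c j) 0 := by
    intro i _
    have h' := (Pf_hasDerivAt (s.erase i) c 0).const_mul (c i)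
    simpa [Df_zero] using h'
  have h2 := HasDerivAt.fun_sum h
  have hfun : Df s c = fun t => ∑ i ∈ s, c i * Pf (s.erase i) c t := rfl
  rw [hfun]
  refine h2.congr_deriv (Eq.symm ?_)
  have : ∀ i ∈ s, c i * ∑ j ∈ s.erase i, c j = c i * (∑ j ∈ s, c j) - c i ^ 2 := by
    intro i hi
    rw [← Finset.add_sum_erase _ _ hi]
    ring
  rw [Finset.sum_congr rfl this, Finset.sum_sub_distrib, ← Finset.sum_mul]
  ring

lemma g_hasDerivAt (s : Finset ι) (c : ι → ℝ) {t : ℝ} (ht : Pf s c t ≠ 0) :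
    HasDerivAt (fun u => ((Pf s c u)⁻¹) ^ 3) (Phif s c t) t := by
  have h1 := ((Pf_hasDerivAt s c t).inv ht).pow 3
  refine h1.congr_deriv (Eq.symm ?_)
  unfold Phif
  rw [div_eq_mul_inv, ← inv_pow]
  norm_num
  ring

lemma Phif_hasDerivAt_zero (s : Finset ι) (c : ι → ℝ) :
    HasDerivAt (Phif s c)
      (9 * (∑ i ∈ s, c i) ^ 2 + 3 * ∑ i ∈ s, (c i) ^ 2) 0 := by
  have hP := Pf_hasDerivAt s c 0
  have hP0 : Pf s c 0 = 1 := Pf_zero s c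
  have hinv : HasDerivAt (fun t => (Pf s c t)⁻¹) (-(Df s c 0)) 0 := by
    exact (hP.inv (by rw [hP0]; norm_num)).congr_deriv (by rw [hP0]; norm_num)
  have hpow : HasDerivAt (fun t => ((Pf s c t)⁻¹) ^ 4) (-(4 * Df s c 0)) 0 := by
    refine (hinv.pow 4).congr_deriv (Eq.symm ?_)
    rw [hP0]
    norm_num
  have hD := Df_hasDerivAt_zero s c
  have hmul := (hpow.mul hD).const_mul (-3 : ℝ)
  have hfun : Phif s c = fun t => -3 * (((Pf s c t)⁻¹) ^ 4 * Df s c t) := by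
    funext t; unfold Phif; ring
  rw [hfun]
  refine hmul.congr_deriv (Eq.symm ?_)
  rw [Df_zero, hP0]
  ring

def cfun : ℕ ⊕ ℕ → ℝ := Sum.elim (fun j => -(1 / (j : ℝ))) fun j => 1 / (j : ℝ)
def sfin (n k : ℕ) : Finset (ℕ ⊕ ℕ) := (Finset.Icc 1 k).disjSum (Finset.Icc 1 (n - k))

lemma inner_eq (n k : ℕ) (t : ℝ) :
    ((∏ j ∈ Finset.Icc 1 k, (1 - t / (j : ℝ))) *
      ∏ j ∈ Finset.Icc 1 (n - k), (1 + t / (j : ℝ))) = Pf (sfin n k) cfun t := by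
  unfold Pf sfin
  rw [Finset.prod_disjSum]
  congr 1
  · exact Finset.prod_congr rfl fun j _ => by simp only [cfun, Sum.elim_inl]; ring
  · exact Finset.prod_congr rfl fun j _ => by simp only [cfun, Sum.elim_inr]; ring

lemma sum_c (n k : ℕ) : ∑ i ∈ sfin n k, cfun i = Hs (n - k) - Hs k := by
  simp only [sfin, cfun, Finset.sum_disjSum, Sum.elim_inl, Sum.elim_inr, Hs,
    Finset.sum_neg_distrib]
  ring

lemma sum_c2 (n k : ℕ) : ∑ i ∈ sfin n k, (cfun i) ^ 2 = H2s k + H2s (n - k) := by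
  simp only [sfin, cfun, Finset.sum_disjSum, Sum.elim_inl, Sum.elim_inr, H2s, neg_sq, div_pow,
    one_pow]

lemma Pf_pos (n k : ℕ) {t : ℝ} (ht : |t| < 1) : 0 < Pf (sfin n k) cfun t := by
  unfold Pf
  refine Finset.prod_pos fun i hi => ?_
  have hc : |cfun i| ≤ 1 := by
    rcases i with j | j
    · simp only [sfin, Finset.inl_mem_disjSum, Finset.mem_Icc] at hi
      have hj : (1 : ℝ) ≤ (j : ℝ) := by exact_mod_cast hi.1
      simp only [cfun, Sum.elim_inl, abs_neg, abs_div, abs_one]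
      rw [abs_of_nonneg (by positivity : (0:ℝ) ≤ (j:ℝ))]
      rw [div_le_one (by linarith)]; linarith
    · simp only [sfin, Finset.inr_mem_disjSum, Finset.mem_Icc] at hi
      have hj : (1 : ℝ) ≤ (j : ℝ) := by exact_mod_cast hi.1
      simp only [cfun, Sum.elim_inr, abs_div, abs_one]
      rw [abs_of_nonneg (by positivity : (0:ℝ) ≤ (j:ℝ))]
      rw [div_le_one (by linarith)]; linarith
  have : |cfun i * t| < 1 := by
    rw [abs_mul]
    calc |cfun i| * |t| ≤ 1 * |t| := by gcongr
    _ = |t| := one_mul _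
    _ < 1 := ht
  have := neg_lt_of_abs_lt this
  linarith

lemma franelA3_eq (n : ℕ) : franelA3 n =
    fun t => ∑ k ∈ Finset.range (n + 1), (n.choose k : ℝ) ^ 3 *
      ((Pf (sfin n k) cfun t)⁻¹) ^ 3 := by
  funext t
  exact Finset.sum_congr rfl fun k _ => by rw [inner_eq]

lemma franelA3_hasDerivAt (n : ℕ) {t : ℝ} (ht : |t| < 1) :
    HasDerivAt (franelA3 n)
      (∑ k ∈ Finset.range (n + 1), (n.choose k : ℝ) ^ 3 * Phif (sfin n k) cfun t) t := by
  rw [franelA3_eq]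
  exact HasDerivAt.fun_sum fun k _ => (g_hasDerivAt _ _ (Pf_pos n k ht).ne').const_mul _

/-- `Q`-factor -/
def Qf (n k : ℕ) : ℝ := 9 * (Hs (n - k) - Hs k) ^ 2 + 3 * (H2s k + H2s (n - k))

lemma iteratedDeriv_franel (n : ℕ) :
    iteratedDeriv 2 (fun t => franelA3 n t) 0
      = ∑ k ∈ Finset.range (n + 1), (n.choose k : ℝ) ^ 3 * Qf n k := by
  have heq : deriv (franelA3 n) =ᶠ[nhds (0 : ℝ)]
      fun t => ∑ k ∈ Finset.range (n + 1), (n.choose k : ℝ) ^ 3 * Phif (sfin n k) cfun t := by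
    filter_upwards [Metric.ball_mem_nhds (0 : ℝ) one_pos] with t ht
    exact (franelA3_hasDerivAt n (by simpa [Real.dist_eq] using ht)).deriv
  have h2 : HasDerivAt
      (fun t => ∑ k ∈ Finset.range (n + 1), (n.choose k : ℝ) ^ 3 * Phif (sfin n k) cfun t)
      (∑ k ∈ Finset.range (n + 1), (n.choose k : ℝ) ^ 3 * Qf n k) 0 := by
    refine HasDerivAt.fun_sum fun k _ => ?_
    have h := (Phif_hasDerivAt_zero (sfin n k) cfun).const_mul ((n.choose k : ℝ) ^ 3)
    rwa [sum_c, sum_c2] at h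
  calc iteratedDeriv 2 (fun t => franelA3 n t) 0 = deriv (deriv (franelA3 n)) 0 := by
        rw [iteratedDeriv_succ, iteratedDeriv_one]
    _ = deriv (fun t => ∑ k ∈ Finset.range (n + 1),
          (n.choose k : ℝ) ^ 3 * Phif (sfin n k) cfun t) 0 := heq.deriv_eq
    _ = _ := h2.deriv

def Sfr (n : ℕ) : ℝ := ∑ k ∈ Finset.range (n + 1), (n.choose k : ℝ) ^ 3
def Tfr (n : ℕ) : ℝ := ∑ k ∈ Finset.range (n + 1), (n.choose k : ℝ) ^ 3 * Qf n k
def Dn (n : ℕ) : ℕ := Nat.sqrt (n * Nat.sqrt n)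

/-! ### Harmonic number facts -/

lemma Hs_nonneg (m : ℕ) : 0 ≤ Hs m := Finset.sum_nonneg fun j _ => by positivity

lemma Hs_mono {a b : ℕ} (h : a ≤ b) : Hs a ≤ Hs b :=
  Finset.sum_le_sum_of_subset_of_nonneg (Finset.Icc_subset_Icc_right h)
    (fun j _ _ => by positivity)

lemma Hs_eq_Ioc (m : ℕ) : Hs m = ∑ j ∈ Finset.Ioc 0 m, (1 : ℝ) / j := by
  rw [Hs, ← Finset.Icc_add_one_left_eq_Ioc]; rfl

lemma Hs_le_self (m : ℕ) : Hs m ≤ m := by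
  calc Hs m ≤ (Finset.Icc 1 m).card • (1 : ℝ) := by
        refine Finset.sum_le_card_nsmul _ _ _ fun j hj => ?_
        rw [Finset.mem_Icc] at hj
        have : (1 : ℝ) ≤ j := by exact_mod_cast hj.1
        rw [div_le_one (by linarith)]; linarith
    _ = m := by rw [Nat.card_Icc]; simp

lemma Hs_sub_le {a b : ℕ} (ha : 1 ≤ a) (hab : a ≤ b) :
    Hs b - Hs a ≤ ((b : ℝ) - a) / a := by
  have hsum := Finset.sum_Ioc_consecutive (M := ℝ) (f := fun j => (1 : ℝ) / j)
    (Nat.zero_le a) hab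
  have hdiff : Hs b - Hs a = ∑ j ∈ Finset.Ioc a b, (1 : ℝ) / j := by
    rw [Hs_eq_Ioc, Hs_eq_Ioc, ← hsum]; ring
  rw [hdiff]
  have ha' : (0 : ℝ) < a := by exact_mod_cast ha
  calc ∑ j ∈ Finset.Ioc a b, (1 : ℝ) / j ≤ (Finset.Ioc a b).card • ((1 : ℝ) / a) := by
        refine Finset.sum_le_card_nsmul _ _ _ fun j hj => ?_
        rw [Finset.mem_Ioc] at hj
        have : (a : ℝ) ≤ j := by exact_mod_cast hj.1.le
        exact one_div_le_one_div_of_le ha' this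
    _ = ((b - a : ℕ) : ℝ) * (1 / a) := by rw [Nat.card_Ioc, nsmul_eq_mul]
    _ = ((b : ℝ) - a) / a := by rw [Nat.cast_sub hab]; ring

lemma abs_Hs_sub {a b : ℕ} {c : ℝ} (hc : 0 < c) (ha : c ≤ a) (hb : c ≤ b) :
    |Hs a - Hs b| ≤ |(a : ℝ) - b| / c := by
  have ha1 : 1 ≤ a := by
    by_contra h
    push_neg at h
    interval_cases a
    · simp at ha; linarith
  have hb1 : 1 ≤ b := by
    by_contra h
    push_neg at h
    interval_cases b
    · simp at hb; linarith
  rcases le_total a b with hab | hab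
  · have h1 := Hs_sub_le ha1 hab
    have h2 : 0 ≤ Hs b - Hs a := by linarith [Hs_mono hab]
    rw [abs_sub_comm, abs_of_nonneg h2]
    have hcast : ((a : ℝ)) ≤ b := by exact_mod_cast hab
    calc Hs b - Hs a ≤ ((b : ℝ) - a) / a := h1
      _ ≤ ((b : ℝ) - a) / c := by gcongr
      _ = |(a : ℝ) - b| / c := by rw [abs_sub_comm, abs_of_nonneg (by linarith)]
  · have h1 := Hs_sub_le hb1 hab
    have h2 : 0 ≤ Hs a - Hs b := by linarith [Hs_mono hab]
    rw [abs_of_nonneg h2]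
    have hcast : ((b : ℝ)) ≤ a := by exact_mod_cast hab
    calc Hs a - Hs b ≤ ((a : ℝ) - b) / b := h1
      _ ≤ ((a : ℝ) - b) / c := by gcongr
      _ = |(a : ℝ) - b| / c := by rw [abs_of_nonneg (by linarith)]

/-! ### Second-order harmonic facts -/

lemma H2s_succ (m : ℕ) : H2s (m + 1) = H2s m + 1 / ((m : ℝ) + 1) ^ 2 := by
  rw [H2s, H2s, Finset.sum_Icc_succ_top (by omega : 1 ≤ m + 1)]
  push_cast
  ring

lemma H2s_range (m : ℕ) : H2s m = ∑ j ∈ Finset.range (m + 1), (1 : ℝ) / (j : ℝ) ^ 2 := by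
  induction m with
  | zero => simp [H2s]
  | succ m ih => rw [H2s_succ, Finset.sum_range_succ, ← ih]; push_cast; ring

lemma H2s_mono {a b : ℕ} (h : a ≤ b) : H2s a ≤ H2s b :=
  Finset.sum_le_sum_of_subset_of_nonneg (Finset.Icc_subset_Icc_right h)
    (fun j _ _ => by positivity)

lemma tendsto_H2s : Tendsto H2s atTop (nhds (π ^ 2 / 6)) := by
  have h := hasSum_zeta_two.tendsto_sum_nat
  have heq : H2s = fun m => ∑ j ∈ Finset.range (m + 1), (1 : ℝ) / (j : ℝ) ^ 2 :=
    funext H2s_range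
  rw [heq]
  exact h.comp (tendsto_add_atTop_nat 1)

lemma H2s_le (m : ℕ) : H2s m ≤ π ^ 2 / 6 :=
  Monotone.ge_of_tendsto (fun _ _ h => H2s_mono h) tendsto_H2s m

lemma H2s_nonneg (m : ℕ) : 0 ≤ H2s m := Finset.sum_nonneg fun j _ => by positivity

lemma H2s_tail {m : ℕ} (hm : 1 ≤ m) : π ^ 2 / 6 ≤ H2s m + 1 / m := by
  have key : ∀ N, m ≤ N → H2s N ≤ H2s m + 1 / (m : ℝ) - 1 / (N : ℝ) := by
    intro N hN
    induction N, hN using Nat.le_induction with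
    | base =>
      have h0 : 1 / (m : ℝ) - 1 / (m : ℝ) = 0 := by ring
      linarith
    | succ N hN ih =>
      have hN1 : (1 : ℝ) ≤ N := by exact_mod_cast le_trans hm hN
      have hN0 : (0 : ℝ) < N := by linarith
      have hN10 : (0 : ℝ) < (N : ℝ) + 1 := by linarith
      have hstep : 1 / ((N : ℝ) + 1) ^ 2 ≤ 1 / (N : ℝ) - 1 / ((N : ℝ) + 1) := by
        rw [div_sub_div _ _ hN0.ne' hN10.ne']
        rw [div_le_div_iff₀ (by positivity) (by positivity)]
        ring_nf
        nlinarith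
      rw [H2s_succ]
      push_cast
      linarith
  refine le_of_tendsto tendsto_H2s (eventually_atTop.2 ⟨m, fun N hN => ?_⟩)
  have hN0 : (0 : ℝ) ≤ 1 / (N : ℝ) := by positivity
  linarith [key N hN]

/-! ### Binomial coefficient facts -/

lemma choose_mono_left {n : ℕ} : ∀ {b a : ℕ}, a ≤ b → b ≤ n / 2 → n.choose a ≤ n.choose b := by
  intro b
  induction b with
  | zero => intro a h _; simp [Nat.le_zero.mp h]
  | succ b ih =>
    intro a h hb
    rcases Nat.lt_or_ge a (b + 1) with h' | h'
    · exact le_trans (ih (Nat.lt_succ_iff.mp h') (le_trans (Nat.le_succ b) hb))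
        (Nat.choose_le_succ_of_lt_half_left hb)
    · have : a = b + 1 := le_antisymm h h'
      simp [this]

lemma ratio_le_exp {N x y t : ℝ} (hN : 1 ≤ N) (ht : 0 ≤ t) (h2t : 2 * t + 2 ≤ N)
    (hx : x ≤ N / 2 - t) (hy : N / 2 + t + 1 ≤ y) (hx0 : 0 ≤ x) :
    x / y ≤ Real.exp (-(2 * t) / N) := by
  have hN0 : (0 : ℝ) < N := by linarith
  have hden : (0 : ℝ) < N / 2 + t := by linarith
  have hy0 : (0 : ℝ) < y := by linarith
  have step1 : x / y ≤ (N / 2 - t) / (N / 2 + t) := by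
    apply div_le_div₀ (by linarith) hx (by linarith) (by linarith)
  have hq1 : 2 * t / N ≤ 1 := by rw [div_le_one hN0]; linarith
  have hq0 : 0 ≤ 2 * t / N := by positivity
  have e : (2 * t / N) * N = 2 * t := by field_simp
  have step2 : (N / 2 - t) / (N / 2 + t) ≤ 1 - 2 * t / N := by
    rw [div_le_iff₀ hden]
    nlinarith [mul_nonneg (sub_nonneg.2 hq1) ht]
  have step3 : 1 - 2 * t / N ≤ Real.exp (-(2 * t) / N) := by
    have := Real.add_one_le_exp (-(2 * t) / N)
    have hrw : -(2 * t) / N = -(2 * t / N) := by ring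
    rw [hrw] at this ⊢
    linarith
  linarith

lemma choose_step {n i : ℕ} (hi : i + 1 ≤ n / 2) :
    (n.choose (n / 2 - i - 1) : ℝ) ≤ n.choose (n / 2 - i) * Real.exp (-(2 * (i : ℝ)) / n) := by
  set m := n / 2 with hm
  have hmn : m ≤ n := Nat.div_le_self n 2
  have hn1 : 1 ≤ n := by omega
  have hid : n.choose (m - i) * (m - i) = n.choose (m - i - 1) * (n - (m - i - 1)) := by
    have h := Nat.choose_succ_right_eq n (m - i - 1)
    have h1 : m - i - 1 + 1 = m - i := by omega
    rw [h1] at h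
    exact h
  have hy1 : 1 ≤ n - (m - i - 1) := by omega
  have hyR : (0 : ℝ) < ((n - (m - i - 1) : ℕ) : ℝ) := by exact_mod_cast hy1
  have hcast : (n.choose (m - i - 1) : ℝ)
      = n.choose (m - i) * ((m - i : ℕ) : ℝ) / ((n - (m - i - 1) : ℕ) : ℝ) := by
    rw [eq_div_iff hyR.ne']
    exact_mod_cast congrArg (Nat.cast (R := ℝ)) hid.symm
  rw [hcast, mul_div_assoc]
  have hratio : ((m - i : ℕ) : ℝ) / ((n - (m - i - 1) : ℕ) : ℝ)
      ≤ Real.exp (-(2 * (i : ℝ)) / n) := by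
    apply ratio_le_exp (N := (n : ℝ)) (t := (i : ℝ))
    · exact_mod_cast hn1
    · positivity
    · have h2i : 2 * i + 2 ≤ n := by omega
      exact_mod_cast Nat.cast_le.2 h2i
    · -- (m - i : ℕ) ≤ n/2 - i
      have h1 : ((m - i : ℕ) : ℝ) = (m : ℝ) - i := by
        rw [Nat.cast_sub (by omega)]
      have h2 : (m : ℝ) ≤ (n : ℝ) / 2 := by
        rw [hm]
        have := Nat.div_mul_le_self n 2
        have h3 : ((n / 2 : ℕ) : ℝ) * 2 ≤ n := by exact_mod_cast Nat.div_mul_le_self n 2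
        linarith
      rw [h1]; linarith
    · -- n/2 + i + 1 ≤ (n - (m-i-1) : ℕ)
      have h1 : ((n - (m - i - 1) : ℕ) : ℝ) = (n : ℝ) - m + i + 1 := by
        have : n - (m - i - 1) = n - m + i + 1 := by omega
        rw [this]
        push_cast [Nat.cast_sub hmn]
        ring
      have h2 : (n : ℝ) / 2 ≤ (n : ℝ) - m := by
        have h3 : 2 * m ≤ n := by omega
        have h4 : 2 * (m : ℝ) ≤ n := by exact_mod_cast h3
        linarith
      rw [h1]; linarith
    · positivity
  calc (n.choose (m - i) : ℝ) * (((m - i : ℕ) : ℝ) / ((n - (m - i - 1) : ℕ) : ℝ))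
      ≤ (n.choose (m - i) : ℝ) * Real.exp (-(2 * (i : ℝ)) / n) := by
        apply mul_le_mul_of_nonneg_left hratio (by positivity)
    _ = _ := rfl

lemma choose_decay {n : ℕ} (hn : 1 ≤ n) :
    ∀ d, d ≤ n / 2 →
      (n.choose (n / 2 - d) : ℝ) ≤ n.choose (n / 2) * Real.exp (-((d : ℝ) * ((d : ℝ) - 1)) / n) := by
  intro d
  induction d with
  | zero => intro _; simp
  | succ d ih =>
    intro hd
    have h1 := ih (by omega)
    have h2 := choose_step (n := n) (i := d) hd
    have hsub : n / 2 - (d + 1) = n / 2 - d - 1 := by omega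
    calc (n.choose (n / 2 - (d + 1)) : ℝ) = n.choose (n / 2 - d - 1) := by rw [hsub]
      _ ≤ n.choose (n / 2 - d) * Real.exp (-(2 * (d : ℝ)) / n) := h2
      _ ≤ (n.choose (n / 2) * Real.exp (-((d : ℝ) * ((d : ℝ) - 1)) / n))
            * Real.exp (-(2 * (d : ℝ)) / n) := by
          have := Real.exp_pos (-(2 * (d : ℝ)) / n)
          gcongr
      _ = n.choose (n / 2) * Real.exp (-(((d : ℕ) + 1 : ℝ) * (((d : ℕ) : ℝ) + 1 - 1)) / n) := by
          rw [mul_assoc, ← Real.exp_add]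
          congr 1
          have hn0 : (0 : ℝ) < n := by exact_mod_cast hn
          field_simp
          ring
      _ = n.choose (n / 2) * Real.exp (-(((d + 1 : ℕ) : ℝ) * (((d + 1 : ℕ) : ℝ) - 1)) / n) := by
          push_cast
          ring_nf

lemma Sfr_ge_one (n : ℕ) : (1 : ℝ) ≤ Sfr n := by
  have h0 : (0 : ℕ) ∈ Finset.range (n + 1) := Finset.mem_range.2 (by omega)
  have := Finset.single_le_sum (f := fun k => (n.choose k : ℝ) ^ 3)
    (fun k _ => by positivity) h0
  simpa [Sfr] using this

lemma Sfr_pos (n : ℕ) : (0 : ℝ) < Sfr n := lt_of_lt_of_le one_pos (Sfr_ge_one n)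

lemma choose_mid_cube_le (n : ℕ) : ((n.choose (n / 2) : ℝ)) ^ 3 ≤ Sfr n := by
  have h0 : n / 2 ∈ Finset.range (n + 1) := Finset.mem_range.2 (by omega)
  exact Finset.single_le_sum (f := fun k => (n.choose k : ℝ) ^ 3)
    (fun k _ => by positivity) h0

/-! ### Main estimate -/

set_option maxHeartbeats 1000000 in
lemma main_est {n : ℕ} (hn : 256 ≤ n) :
    |Tfr n / Sfr n - π ^ 2| ≤
      5184 * (Dn n : ℝ) ^ 2 / (n : ℝ) ^ 2 + 48 / n
        + 58 * (n : ℝ) ^ 3 * Real.exp (-(Nat.sqrt n : ℝ) / 8) := by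
  set m := n / 2 with hm
  set D := Dn n with hD
  -- basic numeric facts
  have hsq16 : 16 ≤ Nat.sqrt n := Nat.le_sqrt.2 (by omega)
  have hsqn : 16 * Nat.sqrt n ≤ n :=
    le_trans (Nat.mul_le_mul_right _ hsq16) (Nat.sqrt_le n)
  have hD2n : D ^ 2 ≤ n * Nat.sqrt n := Nat.sqrt_le' _
  have h16D : 16 * D ^ 2 ≤ n ^ 2 := by
    calc 16 * D ^ 2 ≤ 16 * (n * Nat.sqrt n) := by omega
      _ = n * (16 * Nat.sqrt n) := by ring
      _ ≤ n * n := Nat.mul_le_mul_left _ hsqn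
      _ = n ^ 2 := (sq n).symm
  have h4D : 4 * D ≤ n := by
    by_contra h
    push_neg at h
    have : n ^ 2 < (4 * D) ^ 2 := by
      apply Nat.pow_lt_pow_left h (by norm_num)
    have h2 : (4 * D) ^ 2 = 16 * D ^ 2 := by ring
    omega
  have hD2 : 2 ≤ D := Nat.le_sqrt.2 (by nlinarith)
  have hDm : D + 2 ≤ m := by omega
  have hn1R : (1 : ℝ) ≤ n := by exact_mod_cast (by omega : 1 ≤ n)
  have hn0R : (0 : ℝ) < n := by linarith
  have hS1 : (1 : ℝ) ≤ Sfr n := Sfr_ge_one n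
  have hS0 : (0 : ℝ) < Sfr n := Sfr_pos n
  -- rewrite difference as single sum
  have hsum : Tfr n - π ^ 2 * Sfr n
      = ∑ k ∈ Finset.range (n + 1), (n.choose k : ℝ) ^ 3 * (Qf n k - π ^ 2) := by
    rw [Tfr, Sfr, Finset.mul_sum, ← Finset.sum_sub_distrib]
    exact Finset.sum_congr rfl fun k _ => by ring
  have hkey : Tfr n / Sfr n - π ^ 2
      = (∑ k ∈ Finset.range (n + 1), (n.choose k : ℝ) ^ 3 * (Qf n k - π ^ 2)) / Sfr n := by
    rw [← hsum, sub_div, mul_div_assoc, div_self hS0.ne', mul_one]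
  have habs : |Tfr n / Sfr n - π ^ 2|
      ≤ (∑ k ∈ Finset.range (n + 1), (n.choose k : ℝ) ^ 3 * |Qf n k - π ^ 2|) / Sfr n := by
    rw [hkey, abs_div, abs_of_pos hS0]
    gcongr
    calc |∑ k ∈ Finset.range (n + 1), (n.choose k : ℝ) ^ 3 * (Qf n k - π ^ 2)|
        ≤ ∑ k ∈ Finset.range (n + 1), |(n.choose k : ℝ) ^ 3 * (Qf n k - π ^ 2)| :=
          Finset.abs_sum_le_sum_abs _ _
      _ = ∑ k ∈ Finset.range (n + 1), (n.choose k : ℝ) ^ 3 * |Qf n k - π ^ 2| := by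
          refine Finset.sum_congr rfl fun k _ => ?_
          rw [abs_mul, abs_of_nonneg (by positivity)]
  -- split window / tail
  set W : Finset ℕ := (Finset.range (n + 1)).filter (fun k => m ≤ k + D ∧ k ≤ m + D) with hW
  set Wc : Finset ℕ := (Finset.range (n + 1)).filter (fun k => ¬(m ≤ k + D ∧ k ≤ m + D)) with hWc
  have hsplit : ∑ k ∈ Finset.range (n + 1), (n.choose k : ℝ) ^ 3 * |Qf n k - π ^ 2|
      = (∑ k ∈ W, (n.choose k : ℝ) ^ 3 * |Qf n k - π ^ 2|)
        + ∑ k ∈ Wc, (n.choose k : ℝ) ^ 3 * |Qf n k - π ^ 2| :=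
    (Finset.sum_filter_add_sum_filter_not _ _ _).symm
  -- window pointwise bound
  have hwin : ∀ k ∈ W, |Qf n k - π ^ 2| ≤ 5184 * (D : ℝ) ^ 2 / (n : ℝ) ^ 2 + 48 / n := by
    intro k hk
    rw [hW, Finset.mem_filter, Finset.mem_range] at hk
    obtain ⟨hkn, hk1, hk2⟩ := hk
    have hkn' : k ≤ n := by omega
    have hk8 : n ≤ 8 * k := by omega
    have hnk8 : n ≤ 8 * (n - k) := by omega
    have hk1' : 1 ≤ k := by omega
    have hnk1 : 1 ≤ n - k := by omega
    have hc8 : (0 : ℝ) < (n : ℝ) / 8 := by linarith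
    have hck : (n : ℝ) / 8 ≤ k := by
      have : (n : ℝ) ≤ 8 * k := by exact_mod_cast Nat.cast_le.2 hk8
      linarith
    have hcnk : (n : ℝ) / 8 ≤ ((n - k : ℕ) : ℝ) := by
      have : (n : ℝ) ≤ 8 * ((n - k : ℕ) : ℝ) := by exact_mod_cast Nat.cast_le.2 hnk8
      linarith
    -- |n - 2k| ≤ 2D+1
    have hd1 : n ≤ 2 * k + 2 * D + 1 := by omega
    have hd2 : 2 * k ≤ n + 2 * D := by omega
    have hcastnk : ((n - k : ℕ) : ℝ) = (n : ℝ) - k := by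
      rw [Nat.cast_sub hkn']
    have habsd : |((n - k : ℕ) : ℝ) - (k : ℝ)| ≤ 3 * D := by
      rw [hcastnk, abs_le]
      constructor
      · have : (n : ℝ) + 2 * D ≥ 2 * k := by exact_mod_cast Nat.cast_le.2 hd2
        have hDR : (2 : ℝ) ≤ D := by exact_mod_cast Nat.cast_le.2 hD2
        linarith
      · have : (n : ℝ) ≤ 2 * k + 2 * D + 1 := by exact_mod_cast Nat.cast_le.2 hd1
        have hDR : (2 : ℝ) ≤ D := by exact_mod_cast Nat.cast_le.2 hD2
        linarith
    have hs1 : |Hs (n - k) - Hs k| ≤ 24 * (D : ℝ) / n := by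
      calc |Hs (n - k) - Hs k| ≤ |((n - k : ℕ) : ℝ) - (k : ℝ)| / ((n : ℝ) / 8) :=
            abs_Hs_sub hc8 hcnk hck
        _ ≤ (3 * (D : ℝ)) / ((n : ℝ) / 8) := by gcongr
        _ = 24 * (D : ℝ) / n := by field_simp; ring
    have hs1sq : (Hs (n - k) - Hs k) ^ 2 ≤ 576 * (D : ℝ) ^ 2 / (n : ℝ) ^ 2 := by
      have h1 : (Hs (n - k) - Hs k) ^ 2 = |Hs (n - k) - Hs k| ^ 2 := (sq_abs _).symm
      rw [h1]
      calc |Hs (n - k) - Hs k| ^ 2 ≤ (24 * (D : ℝ) / n) ^ 2 := by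
            apply pow_le_pow_left₀ (abs_nonneg _) hs1
        _ = 576 * (D : ℝ) ^ 2 / (n : ℝ) ^ 2 := by field_simp; ring
    -- H2s bounds
    have hHk : π ^ 2 / 6 - 8 / (n : ℝ) ≤ H2s k := by
      have h1 := H2s_tail hk1'
      have h2 : 1 / (k : ℝ) ≤ 8 / n := by
        rw [div_le_div_iff₀ (by exact_mod_cast hk1') hn0R]
        have : (n : ℝ) ≤ 8 * k := by exact_mod_cast Nat.cast_le.2 hk8
        linarith
      linarith
    have hHnk : π ^ 2 / 6 - 8 / (n : ℝ) ≤ H2s (n - k) := by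
      have h1 := H2s_tail hnk1
      have h2 : 1 / ((n - k : ℕ) : ℝ) ≤ 8 / n := by
        rw [div_le_div_iff₀ (by exact_mod_cast hnk1) hn0R]
        have : (n : ℝ) ≤ 8 * ((n - k : ℕ) : ℝ) := by exact_mod_cast Nat.cast_le.2 hnk8
        linarith
      linarith
    have hHk2 := H2s_le k
    have hHnk2 := H2s_le (n - k)
    have hQ : Qf n k - π ^ 2
        = 9 * (Hs (n - k) - Hs k) ^ 2 + 3 * (H2s k - π ^ 2 / 6) + 3 * (H2s (n - k) - π ^ 2 / 6) := by
      rw [Qf]; ring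
    have hsq0 : 0 ≤ (Hs (n - k) - Hs k) ^ 2 := sq_nonneg _
    have hpos1 : (0 : ℝ) ≤ 5184 * (D : ℝ) ^ 2 / (n : ℝ) ^ 2 := by positivity
    have hb1 : (48 : ℝ) / (n : ℝ) = 6 * (8 / (n : ℝ)) := by ring
    have hb2 : 5184 * (D : ℝ) ^ 2 / (n : ℝ) ^ 2 = 9 * (576 * (D : ℝ) ^ 2 / (n : ℝ) ^ 2) := by
      ring
    have hpos2 : (0 : ℝ) ≤ 8 / (n : ℝ) := by positivity
    rw [hQ, abs_le]
    constructor
    · linarith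
    · linarith
  -- window sum bound
  have hwinsum : (∑ k ∈ W, (n.choose k : ℝ) ^ 3 * |Qf n k - π ^ 2|) / Sfr n
      ≤ 5184 * (D : ℝ) ^ 2 / (n : ℝ) ^ 2 + 48 / n := by
    have hE0 : 0 ≤ 5184 * (D : ℝ) ^ 2 / (n : ℝ) ^ 2 + 48 / n := by positivity
    have h1 : ∑ k ∈ W, (n.choose k : ℝ) ^ 3 * |Qf n k - π ^ 2|
        ≤ ∑ k ∈ W, (n.choose k : ℝ) ^ 3 * (5184 * (D : ℝ) ^ 2 / (n : ℝ) ^ 2 + 48 / n) := by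
      refine Finset.sum_le_sum fun k hk => ?_
      exact mul_le_mul_of_nonneg_left (hwin k hk) (by positivity)
    have h2 : ∑ k ∈ W, (n.choose k : ℝ) ^ 3 * (5184 * (D : ℝ) ^ 2 / (n : ℝ) ^ 2 + 48 / n)
        = (∑ k ∈ W, (n.choose k : ℝ) ^ 3) * (5184 * (D : ℝ) ^ 2 / (n : ℝ) ^ 2 + 48 / n) := by
      rw [Finset.sum_mul]
    have h3 : ∑ k ∈ W, (n.choose k : ℝ) ^ 3 ≤ Sfr n := by
      rw [Sfr]
      exact Finset.sum_le_sum_of_subset_of_nonneg (Finset.filter_subset _ _)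
        (fun k _ _ => by positivity)
    rw [div_le_iff₀ hS0]
    calc ∑ k ∈ W, (n.choose k : ℝ) ^ 3 * |Qf n k - π ^ 2|
        ≤ (∑ k ∈ W, (n.choose k : ℝ) ^ 3) * (5184 * (D : ℝ) ^ 2 / (n : ℝ) ^ 2 + 48 / n) := by
          rw [← h2]; exact h1
      _ ≤ Sfr n * (5184 * (D : ℝ) ^ 2 / (n : ℝ) ^ 2 + 48 / n) := by gcongr
      _ = (5184 * (D : ℝ) ^ 2 / (n : ℝ) ^ 2 + 48 / n) * Sfr n := by ring
  -- tail pointwise bounds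
  have hmid1 : 1 ≤ n.choose m := Nat.choose_pos (by omega)
  have hmidR : (1 : ℝ) ≤ (n.choose m : ℝ) := by exact_mod_cast Nat.cast_le.2 hmid1
  have hdecay : (n.choose (m - D) : ℝ)
      ≤ n.choose m * Real.exp (-((D : ℝ) * ((D : ℝ) - 1)) / n) :=
    choose_decay (by omega) D (by omega)
  have hexp : Real.exp (-((D : ℝ) * ((D : ℝ) - 1)) / n) ≤ Real.exp (-(Nat.sqrt n : ℝ) / 8) := by
    apply Real.exp_le_exp.2
    rw [div_le_div_iff₀ hn0R (by norm_num : (0:ℝ) < 8)]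
    have hDD : (n : ℝ) * (Nat.sqrt n : ℝ) ≤ 4 * (D : ℝ) ^ 2 := by
      have h1 : n * Nat.sqrt n < (D + 1) ^ 2 := Nat.lt_succ_sqrt' _
      have h2 : (D + 1) ^ 2 ≤ 4 * D ^ 2 := by nlinarith
      have h3 : n * Nat.sqrt n ≤ 4 * D ^ 2 := by omega
      exact_mod_cast Nat.cast_le.2 h3
    have hDR : (2 : ℝ) ≤ D := by exact_mod_cast Nat.cast_le.2 hD2
    nlinarith
  have htailpt : ∀ k ∈ Wc, (n.choose k : ℝ) ^ 3 * |Qf n k - π ^ 2|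
      ≤ (n.choose m : ℝ) ^ 3 * Real.exp (-(Nat.sqrt n : ℝ) / 8) * (29 * (n : ℝ) ^ 2) := by
    intro k hk
    rw [hWc, Finset.mem_filter, Finset.mem_range] at hk
    obtain ⟨hkn, hkout⟩ := hk
    have hkn' : k ≤ n := by omega
    -- choose bound
    have hchoose : n.choose k ≤ n.choose (m - D) := by
      rcases not_and_or.1 hkout with h | h
      · push_neg at h
        exact choose_mono_left (by omega) (by omega)
      · push_neg at h
        rw [← Nat.choose_symm hkn']
        exact choose_mono_left (by omega) (by omega)
    have hchooseR : (n.choose k : ℝ) ≤ (n.choose (m - D) : ℝ) := by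
      exact_mod_cast Nat.cast_le.2 hchoose
    have hmidk : (n.choose k : ℝ) ≤ (n.choose m : ℝ) := by
      exact_mod_cast Nat.cast_le.2 (Nat.choose_le_middle k n)
    have hck0 : (0 : ℝ) ≤ (n.choose k : ℝ) := by positivity
    -- Q bound
    have hQb : |Qf n k - π ^ 2| ≤ 29 * (n : ℝ) ^ 2 := by
      have hHsk : Hs k ≤ Hs n := Hs_mono hkn'
      have hHsnk : Hs (n - k) ≤ Hs n := Hs_mono (by omega)
      have hHn : Hs n ≤ n := Hs_le_self n
      have h1 : |Hs (n - k) - Hs k| ≤ (n : ℝ) := by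
        rw [abs_le]
        constructor
        · have := Hs_nonneg (n - k)
          linarith
        · have := Hs_nonneg k
          linarith
      have hsq : (Hs (n - k) - Hs k) ^ 2 ≤ (n : ℝ) ^ 2 := by
        rw [← sq_abs]
        apply pow_le_pow_left₀ (abs_nonneg _) h1
      have hsq0 : 0 ≤ (Hs (n - k) - Hs k) ^ 2 := sq_nonneg _
      have hH2a := H2s_le k
      have hH2b := H2s_le (n - k)
      have hH2a0 := H2s_nonneg k
      have hH2b0 := H2s_nonneg (n - k)
      have hpi : π ≤ 4 := by linarith [Real.pi_le_four]
      have hpi0 : 0 < π := Real.pi_pos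
      have hpisq : π ^ 2 ≤ 16 := by nlinarith
      have hn2 : (1 : ℝ) ≤ (n : ℝ) ^ 2 := by nlinarith
      rw [Qf, abs_le]
      constructor
      · linarith
      · linarith
    calc (n.choose k : ℝ) ^ 3 * |Qf n k - π ^ 2|
        ≤ (n.choose k : ℝ) ^ 3 * (29 * (n : ℝ) ^ 2) := by
          apply mul_le_mul_of_nonneg_left hQb (by positivity)
      _ ≤ ((n.choose m : ℝ) * Real.exp (-(Nat.sqrt n : ℝ) / 8)
            * ((n.choose m : ℝ) * (n.choose m : ℝ))) * (29 * (n : ℝ) ^ 2) := by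
          have hb : (n.choose k : ℝ) ^ 3
              ≤ (n.choose m : ℝ) * Real.exp (-(Nat.sqrt n : ℝ) / 8)
                * ((n.choose m : ℝ) * (n.choose m : ℝ)) := by
            have hk1 : (n.choose k : ℝ) ≤ (n.choose m : ℝ) * Real.exp (-(Nat.sqrt n : ℝ) / 8) := by
              calc (n.choose k : ℝ) ≤ (n.choose (m - D) : ℝ) := hchooseR
                _ ≤ n.choose m * Real.exp (-((D : ℝ) * ((D : ℝ) - 1)) / n) := hdecay
                _ ≤ n.choose m * Real.exp (-(Nat.sqrt n : ℝ) / 8) := by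
                    apply mul_le_mul_of_nonneg_left hexp (by positivity)
            calc (n.choose k : ℝ) ^ 3 = (n.choose k : ℝ) * ((n.choose k : ℝ) * (n.choose k : ℝ)) := by
                  ring
              _ ≤ ((n.choose m : ℝ) * Real.exp (-(Nat.sqrt n : ℝ) / 8))
                    * ((n.choose m : ℝ) * (n.choose m : ℝ)) := by
                  apply mul_le_mul hk1 (mul_le_mul hmidk hmidk hck0 (by positivity)) (by positivity)
                    (by positivity)
          apply mul_le_mul_of_nonneg_right hb (by positivity)
      _ = (n.choose m : ℝ) ^ 3 * Real.exp (-(Nat.sqrt n : ℝ) / 8) * (29 * (n : ℝ) ^ 2) := by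
          ring
  -- tail sum bound
  have htailsum : (∑ k ∈ Wc, (n.choose k : ℝ) ^ 3 * |Qf n k - π ^ 2|) / Sfr n
      ≤ 58 * (n : ℝ) ^ 3 * Real.exp (-(Nat.sqrt n : ℝ) / 8) := by
    have hcard : (Wc.card : ℝ) ≤ (n : ℝ) + 1 := by
      have h1 : Wc.card ≤ (Finset.range (n + 1)).card := Finset.card_le_card (Finset.filter_subset _ _)
      rw [Finset.card_range] at h1
      exact_mod_cast Nat.cast_le.2 h1
    have h1 : ∑ k ∈ Wc, (n.choose k : ℝ) ^ 3 * |Qf n k - π ^ 2|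
        ≤ Wc.card • ((n.choose m : ℝ) ^ 3 * Real.exp (-(Nat.sqrt n : ℝ) / 8) * (29 * (n : ℝ) ^ 2)) :=
      Finset.sum_le_card_nsmul _ _ _ htailpt
    rw [nsmul_eq_mul] at h1
    have hCm0 : (0 : ℝ) < (n.choose m : ℝ) ^ 3 := by positivity
    have hCmS : (n.choose m : ℝ) ^ 3 ≤ Sfr n := choose_mid_cube_le n
    have hnum0 : 0 ≤ ∑ k ∈ Wc, (n.choose k : ℝ) ^ 3 * |Qf n k - π ^ 2| :=
      Finset.sum_nonneg fun k _ => by positivity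
    have hexp0 : 0 < Real.exp (-(Nat.sqrt n : ℝ) / 8) := Real.exp_pos _
    calc (∑ k ∈ Wc, (n.choose k : ℝ) ^ 3 * |Qf n k - π ^ 2|) / Sfr n
        ≤ (∑ k ∈ Wc, (n.choose k : ℝ) ^ 3 * |Qf n k - π ^ 2|) / (n.choose m : ℝ) ^ 3 :=
          div_le_div_of_nonneg_left hnum0 hCm0 hCmS
      _ ≤ ((Wc.card : ℝ) * ((n.choose m : ℝ) ^ 3 * Real.exp (-(Nat.sqrt n : ℝ) / 8)
            * (29 * (n : ℝ) ^ 2))) / (n.choose m : ℝ) ^ 3 := by gcongr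
      _ = (Wc.card : ℝ) * Real.exp (-(Nat.sqrt n : ℝ) / 8) * (29 * (n : ℝ) ^ 2) := by
          field_simp
      _ ≤ ((n : ℝ) + 1) * Real.exp (-(Nat.sqrt n : ℝ) / 8) * (29 * (n : ℝ) ^ 2) := by
          gcongr
      _ ≤ 58 * (n : ℝ) ^ 3 * Real.exp (-(Nat.sqrt n : ℝ) / 8) := by
          have h : ((n : ℝ) + 1) * (29 * (n : ℝ) ^ 2) ≤ 58 * (n : ℝ) ^ 3 := by
            nlinarith [mul_nonneg (sub_nonneg.2 hn1R) (sq_nonneg (n : ℝ))]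
          calc ((n : ℝ) + 1) * Real.exp (-(Nat.sqrt n : ℝ) / 8) * (29 * (n : ℝ) ^ 2)
              = (((n : ℝ) + 1) * (29 * (n : ℝ) ^ 2)) * Real.exp (-(Nat.sqrt n : ℝ) / 8) := by ring
            _ ≤ (58 * (n : ℝ) ^ 3) * Real.exp (-(Nat.sqrt n : ℝ) / 8) :=
                mul_le_mul_of_nonneg_right h hexp0.le
            _ = _ := by ring
  calc |Tfr n / Sfr n - π ^ 2|
      ≤ (∑ k ∈ Finset.range (n + 1), (n.choose k : ℝ) ^ 3 * |Qf n k - π ^ 2|) / Sfr n := habs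
    _ = (∑ k ∈ W, (n.choose k : ℝ) ^ 3 * |Qf n k - π ^ 2|) / Sfr n
        + (∑ k ∈ Wc, (n.choose k : ℝ) ^ 3 * |Qf n k - π ^ 2|) / Sfr n := by
        rw [hsplit, add_div]
    _ ≤ (5184 * (D : ℝ) ^ 2 / (n : ℝ) ^ 2 + 48 / n)
        + 58 * (n : ℝ) ^ 3 * Real.exp (-(Nat.sqrt n : ℝ) / 8) := add_le_add hwinsum htailsum
    _ = _ := by ring

/-! ### Limits -/

lemma nat_sqrt_tendsto : Tendsto Nat.sqrt atTop atTop := by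
  apply tendsto_atTop_atTop.2
  intro b
  exact ⟨b * b, fun n hn => Nat.le_sqrt.2 hn⟩

lemma tendsto_term1 :
    Tendsto (fun n : ℕ => 5184 * (Dn n : ℝ) ^ 2 / (n : ℝ) ^ 2) atTop (nhds 0) := by
  have h := (tendsto_const_div_atTop_nhds_zero_nat (5184 : ℝ)).comp
    (tendsto_natCast_atTop_atTop.comp nat_sqrt_tendsto)
  apply squeeze_zero_norm' _ h
  filter_upwards [eventually_ge_atTop 1] with n hn
  have hs1 : 1 ≤ Nat.sqrt n := Nat.le_sqrt.2 (by omega)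
  have hsR : (1 : ℝ) ≤ (Nat.sqrt n : ℝ) := by exact_mod_cast hs1
  have hnR : (1 : ℝ) ≤ (n : ℝ) := by exact_mod_cast hn
  have hD2 : ((Dn n : ℝ)) ^ 2 ≤ (n : ℝ) * (Nat.sqrt n : ℝ) := by
    exact_mod_cast Nat.cast_le.2 (Nat.sqrt_le' _)
  have hss : (Nat.sqrt n : ℝ) * (Nat.sqrt n : ℝ) ≤ (n : ℝ) := by
    exact_mod_cast Nat.cast_le.2 (Nat.sqrt_le n)
  rw [Real.norm_eq_abs, abs_of_nonneg (by positivity)]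
  show 5184 * (Dn n : ℝ) ^ 2 / (n : ℝ) ^ 2 ≤ 5184 / (Nat.sqrt n : ℝ)
  rw [div_le_div_iff₀ (by positivity) (by positivity)]
  have k1 : (Dn n : ℝ) ^ 2 * (Nat.sqrt n : ℝ) ≤ ((n : ℝ) * (Nat.sqrt n : ℝ)) * (Nat.sqrt n : ℝ) :=
    mul_le_mul_of_nonneg_right hD2 (by positivity)
  have k2 : ((n : ℝ) * (Nat.sqrt n : ℝ)) * (Nat.sqrt n : ℝ) ≤ (n : ℝ) * (n : ℝ) := by
    nlinarith
  nlinarith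

lemma tendsto_term3 :
    Tendsto (fun n : ℕ => 58 * (n : ℝ) ^ 3 * Real.exp (-(Nat.sqrt n : ℝ) / 8)) atTop (nhds 0) := by
  have hs8 : Tendsto (fun n : ℕ => (Nat.sqrt n : ℝ) / 8) atTop atTop :=
    (tendsto_natCast_atTop_atTop.comp nat_sqrt_tendsto).atTop_div_const (by norm_num)
  have h := (tendsto_pow_mul_exp_neg_atTop_nhds_zero 6).comp hs8
  have h2 := h.const_mul (58 * 64 * 8 ^ 6 : ℝ)
  rw [mul_zero] at h2
  apply squeeze_zero_norm' _ h2
  filter_upwards [eventually_ge_atTop 1] with n hn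
  have hs1 : 1 ≤ Nat.sqrt n := Nat.le_sqrt.2 (by omega)
  have hsR : (1 : ℝ) ≤ (Nat.sqrt n : ℝ) := by exact_mod_cast hs1
  have h4 : n < (Nat.sqrt n + 1) ^ 2 := Nat.lt_succ_sqrt' n
  have h5 : n ≤ 4 * Nat.sqrt n ^ 2 := by nlinarith
  have h5R : (n : ℝ) ≤ 4 * (Nat.sqrt n : ℝ) ^ 2 := by exact_mod_cast Nat.cast_le.2 h5
  have h0 : (0 : ℝ) ≤ (n : ℝ) := by positivity
  have hn3 : (n : ℝ) ^ 3 ≤ 64 * ((Nat.sqrt n : ℝ)) ^ 6 := by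
    calc (n : ℝ) ^ 3 ≤ (4 * (Nat.sqrt n : ℝ) ^ 2) ^ 3 := pow_le_pow_left₀ h0 h5R 3
      _ = 64 * (Nat.sqrt n : ℝ) ^ 6 := by ring
  rw [Real.norm_eq_abs, abs_of_nonneg (by positivity)]
  have hexp0 : (0 : ℝ) < Real.exp (-(Nat.sqrt n : ℝ) / 8) := Real.exp_pos _
  calc 58 * (n : ℝ) ^ 3 * Real.exp (-(Nat.sqrt n : ℝ) / 8)
      ≤ 58 * (64 * (Nat.sqrt n : ℝ) ^ 6) * Real.exp (-(Nat.sqrt n : ℝ) / 8) := by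
        apply mul_le_mul_of_nonneg_right _ hexp0.le
        linarith
    _ = 58 * 64 * 8 ^ 6 * (((Nat.sqrt n : ℝ) / 8) ^ 6 * Real.exp (-((Nat.sqrt n : ℝ) / 8))) := by
        rw [neg_div]
        ring
  
lemma tendsto_ratio : Tendsto (fun n : ℕ => Tfr n / Sfr n) atTop (nhds (π ^ 2)) := by
  rw [← tendsto_sub_nhds_zero_iff]
  have hR : Tendsto (fun n : ℕ => 5184 * (Dn n : ℝ) ^ 2 / (n : ℝ) ^ 2 + 48 / (n : ℝ)
      + 58 * (n : ℝ) ^ 3 * Real.exp (-(Nat.sqrt n : ℝ) / 8)) atTop (nhds 0) := by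
    have h := (tendsto_term1.add (tendsto_const_div_atTop_nhds_zero_nat 48)).add tendsto_term3
    simpa using h
  apply squeeze_zero_norm' _ hR
  filter_upwards [eventually_ge_atTop 256] with n hn
  rw [Real.norm_eq_abs]
  exact main_est hn

end FranelAux

/-- `B(n)`: the `t²`-coefficient of `A^{(3)}(n,t)`, normalised so that `B(1) = 1`. -/
noncomputable def franelB (n : ℕ) : ℝ :=
  (iteratedDeriv 2 (fun t => franelA3 n t) 0 / 2) / 12

theorem franel_apery_limit :
    Tendsto (fun n : ℕ =>
        franelB n / ∑ k ∈ Finset.range (n + 1), (n.choose k : ℝ) ^ 3)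
      atTop (nhds (π ^ 2 / 24)) := by
  have h := tendsto_ratio.div_const (24 : ℝ)
  have heq : (fun n : ℕ => franelB n / ∑ k ∈ Finset.range (n + 1), (n.choose k : ℝ) ^ 3)
      = fun n : ℕ => Tfr n / Sfr n / 24 := by
    funext n
    have hB : franelB n = Tfr n / 24 := by
      unfold franelB Tfr
      rw [iteratedDeriv_franel]
      ring
    rw [hB]
    show Tfr n / 24 / Sfr n = Tfr n / Sfr n / 24
    ring
  rw [heq]
  exact h
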